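/- Let ABCD be a quadrilateral with no three vertices collinear, and let P be a point not on its sides. Let E, F, G, H be the feet of the perpendiculars from P to lines AB, BC, CD, DA respectively. Then E, F, G, H are concyclic if and only if the directed angles satisfy ∠APB = ∠DPC. -/

import Mathlib

open Complex ComplexConjugate

/-- The foot of the perpendicular from `p` to the line through `u` and `v` in `ℂ`. -/
noncomputable def perpFoot (p u v : ℂ) : ℂ :=
  u + ((((p - u) * conj (v - u)).re / Complex.normSq (v - u) : ℝ) : ℂ) * (v - u)

set_option maxHeartbeats 1000000

attribute [local instance] finrank_real_complex_fact

lemma aux_diff (x y w X Y W : ℂ) (h1 : Y - X ≠ 0) (h2 : X - W ≠ 0) :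
    (w*X - W*x)/(2*(X - W)) - (x*Y - X*y)/(2*(Y - X))
      = X*(X*(y - w) + Y*(w - x) + W*(x - y))/(2*((X - W)*(Y - X))) := by
  field_simp
  ring

lemma aux_central (x y z w X Y Z W : ℂ)
    (hyx : y - x ≠ 0) (hzy : z - y ≠ 0) (hwz : w - z ≠ 0) (hxw : x - w ≠ 0)
    (hYX : Y - X ≠ 0) (hZY : Z - Y ≠ 0) (hWZ : W - Z ≠ 0) (hXW : X - W ≠ 0)
    (E F G H E' F' G' H' : ℂ)
    (hE : E = (x*Y - X*y)/(2*(Y - X))) (hF : F = (y*Z - Y*z)/(2*(Z - Y)))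
    (hG : G = (z*W - Z*w)/(2*(W - Z))) (hH : H = (w*X - W*x)/(2*(X - W)))
    (hE' : E' = (X*y - x*Y)/(2*(y - x))) (hF' : F' = (Y*z - y*Z)/(2*(z - y)))
    (hG' : G' = (Z*w - z*W)/(2*(w - z))) (hH' : H' = (W*x - w*X)/(2*(x - w))) :
    ((H - E)*(F - G)*((F' - E')*(H' - G'))) * ((x*z)*(Y*W))
      = ((H' - E')*(F' - G')*((F - E)*(H - G))) * ((X*Z)*(y*w)) := by
  subst hE hF hG hH hE' hF' hG' hH'
  field_simp
  ring

lemma perpFoot_sub (p u v : ℂ) (huv : u ≠ v) :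
    perpFoot p u v - p =
      ((u - p) * conj (v - p) - conj (u - p) * (v - p)) /
        (2 * (conj (v - p) - conj (u - p))) := by
  have hw : v - u ≠ 0 := sub_ne_zero.2 (Ne.symm huv)
  have hw' : conj (v - u) ≠ 0 := star_ne_zero.2 hw
  have hcv : conj v - conj u ≠ 0 := by rw [← map_sub]; exact hw'
  have h1 : ((((p - u) * conj (v - u)).re / Complex.normSq (v - u) : ℝ) : ℂ) =
      ((p - u) * conj (v - u) + conj (p - u) * (v - u)) / (2 * ((v - u) * conj (v - u))) := by
    rw [Complex.ofReal_div, ← Complex.mul_conj]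
    have h2 : ((((p - u) * conj (v - u)).re : ℝ) : ℂ) =
        ((p - u) * conj (v - u) + conj ((p - u) * conj (v - u))) / 2 := by
      rw [Complex.add_conj]; push_cast; ring
    rw [h2, map_mul, Complex.conj_conj, div_div]
  have h2 : conj (v - p) - conj (u - p) = conj (v - u) := by
    rw [← map_sub]; congr 1; ring
  rw [perpFoot, h1, h2]
  simp only [map_sub]
  field_simp
  ring

lemma two_zsmul_oangle_eq_iff_im {u v x y : ℂ} (hu : u ≠ 0) (hv : v ≠ 0) (hx : x ≠ 0) (hy : y ≠ 0) :
    (2 : ℤ) • Complex.orientation.oangle u v = (2 : ℤ) • Complex.orientation.oangle x y ↔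
      ((conj u * v) * conj (conj x * y)).im = 0 := by
  have hA : conj u * v ≠ 0 := mul_ne_zero (star_ne_zero.2 hu) hv
  have hB : conj x * y ≠ 0 := mul_ne_zero (star_ne_zero.2 hx) hy
  set A := conj u * v with hAdef
  set B := conj x * y with hBdef
  rw [Complex.oangle, Complex.oangle, Real.Angle.two_zsmul_eq_iff]
  have step1 : ((Complex.arg A : Real.Angle) = (Complex.arg B : Real.Angle) ∨
      (Complex.arg A : Real.Angle) = (Complex.arg B : Real.Angle) + ((Real.pi : ℝ) : Real.Angle)) ↔
      ((Complex.arg (A / B) : Real.Angle) = (0 : Real.Angle) ∨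
        (Complex.arg (A / B) : Real.Angle) = ((Real.pi : ℝ) : Real.Angle)) := by
    rw [Complex.arg_div_coe_angle hA hB]
    constructor
    · rintro (hh | hh)
      · exact Or.inl (by rw [hh]; abel)
      · exact Or.inr (by rw [hh]; abel)
    · rintro (hh | hh)
      · exact Or.inl (by rwa [sub_eq_zero] at hh)
      · exact Or.inr (by rwa [sub_eq_iff_eq_add, add_comm ((Real.pi : ℝ) : Real.Angle)] at hh)
  rw [step1]
  have c0 : ((Complex.arg (A / B) : Real.Angle) = (0 : Real.Angle)) ↔ Complex.arg (A / B) = 0 := by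
    rw [show (0 : Real.Angle) = ((Complex.arg 1 : ℝ) : Real.Angle) by simp,
      Complex.arg_coe_angle_eq_iff, Complex.arg_one]
  have cpi : ((Complex.arg (A / B) : Real.Angle) = ((Real.pi : ℝ) : Real.Angle)) ↔
      Complex.arg (A / B) = Real.pi := by
    rw [show ((Real.pi : ℝ) : Real.Angle) = ((Complex.arg (-1) : ℝ) : Real.Angle) by simp,
      Complex.arg_coe_angle_eq_iff, Complex.arg_neg_one]
  rw [c0, cpi, Complex.arg_eq_zero_iff, Complex.arg_eq_pi_iff]
  have hmul : A * conj B = (A / B) * ((Complex.normSq B : ℝ) : ℂ) := by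
    rw [div_mul_eq_mul_div, ← Complex.mul_conj]
    field_simp
  have him : (A * conj B).im = (A / B).im * Complex.normSq B := by
    rw [hmul]; simp [Complex.mul_im]
  have hns : Complex.normSq B ≠ 0 := by simpa [Complex.normSq_eq_zero] using hB
  rw [him]
  constructor
  · rintro (⟨_, hh⟩ | ⟨_, hh⟩) <;> simp [hh]
  · intro hh
    have him0 : (A / B).im = 0 := by
      rcases mul_eq_zero.1 hh with hh' | hh'
      · exact hh'
      · exact absurd hh' hns
    rcases lt_or_ge (A / B).re 0 with hr | hr
    · exact Or.inr ⟨hr, him0⟩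
    · exact Or.inl ⟨hr, him0⟩

lemma ne12_of_not_collinear {x y z : ℂ} (h : ¬ Collinear ℝ ({x, y, z} : Set ℂ)) : x ≠ y := by
  rintro rfl
  exact h (by simpa using (collinear_pair ℝ x z).subset (by intro t ht; simp at ht ⊢; tauto))

lemma ne23_of_not_collinear {x y z : ℂ} (h : ¬ Collinear ℝ ({x, y, z} : Set ℂ)) : y ≠ z := by
  rintro rfl
  exact h ((collinear_pair ℝ x y).subset (by intro t ht; simp at ht ⊢; tauto))

lemma ne13_of_not_collinear {x y z : ℂ} (h : ¬ Collinear ℝ ({x, y, z} : Set ℂ)) : x ≠ z := by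
  rintro rfl
  exact h ((collinear_pair ℝ x y).subset (by intro t ht; simp at ht ⊢; tauto))

/-- for a quadrilateral `ABCD` with no three vertices collinear and a point
`P` not on its side lines, the feet `E, F, G, H` of the perpendiculars from `P` to lines
`AB, BC, CD, DA` (assumed distinct) are concyclic (in the directed-angle sense: they lie
on a common circle or a common line) if and only if `∠APB = ∠DPC` as directed angles,
i.e. `(b-p)(d-p) / ((a-p)(c-p))` is real. -/
theorem feet_concyclic_iff_angles (a b c d p e f g h : ℂ)
    (h1 : ¬ Collinear ℝ ({a, b, c} : Set ℂ)) (h2 : ¬ Collinear ℝ ({a, b, d} : Set ℂ))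
    (h3 : ¬ Collinear ℝ ({a, c, d} : Set ℂ)) (h4 : ¬ Collinear ℝ ({b, c, d} : Set ℂ))
    (hpab : ¬ Collinear ℝ ({p, a, b} : Set ℂ)) (hpbc : ¬ Collinear ℝ ({p, b, c} : Set ℂ))
    (hpcd : ¬ Collinear ℝ ({p, c, d} : Set ℂ)) (hpda : ¬ Collinear ℝ ({p, d, a} : Set ℂ))
    (he : e = perpFoot p a b) (hf : f = perpFoot p b c)
    (hg : g = perpFoot p c d) (hh : h = perpFoot p d a)
    (hef : e ≠ f) (heg : e ≠ g) (heh : e ≠ h) (hfg : f ≠ g) (hfh : f ≠ h) (hgh : g ≠ h) :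
    ((∃ o : ℂ, ∃ r : ℝ, ‖e - o‖ = r ∧ ‖f - o‖ = r ∧
        ‖g - o‖ = r ∧ ‖h - o‖ = r) ∨
      Collinear ℝ ({e, f, g, h} : Set ℂ)) ↔
    ((b - p) * (d - p) * conj ((a - p) * (c - p))).im = 0 := by
  letI : Module.Oriented ℝ ℂ (Fin 2) := ⟨Complex.orientation⟩
  have hoang : ∀ p₁ p₂ p₃ : ℂ, EuclideanGeometry.oangle p₁ p₂ p₃
      = Complex.orientation.oangle (p₁ - p₂) (p₃ - p₂) := fun _ _ _ => rfl
  -- vertex distinctness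
  have hab : a ≠ b := ne12_of_not_collinear h1
  have hbc : b ≠ c := ne23_of_not_collinear h1
  have hcd : c ≠ d := ne23_of_not_collinear h4
  have hda : d ≠ a := (ne13_of_not_collinear h2).symm
  have hpa : a ≠ p := (ne12_of_not_collinear hpab).symm
  have hpb : b ≠ p := (ne13_of_not_collinear hpab).symm
  have hpc : c ≠ p := (ne13_of_not_collinear hpbc).symm
  have hpd : d ≠ p := (ne12_of_not_collinear hpda).symm
  -- nonzero differences
  have dba : (b - p) - (a - p) ≠ 0 := by
    have : (b - p) - (a - p) = b - a := by ring
    rw [this]; exact sub_ne_zero.2 hab.symm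
  have dcb : (c - p) - (b - p) ≠ 0 := by
    have : (c - p) - (b - p) = c - b := by ring
    rw [this]; exact sub_ne_zero.2 hbc.symm
  have ddc : (d - p) - (c - p) ≠ 0 := by
    have : (d - p) - (c - p) = d - c := by ring
    rw [this]; exact sub_ne_zero.2 hcd.symm
  have dad : (a - p) - (d - p) ≠ 0 := by
    have : (a - p) - (d - p) = a - d := by ring
    rw [this]; exact sub_ne_zero.2 hda.symm
  have dba' : conj (b - p) - conj (a - p) ≠ 0 := by
    rw [← map_sub]; exact star_ne_zero.2 dba
  have dcb' : conj (c - p) - conj (b - p) ≠ 0 := by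
    rw [← map_sub]; exact star_ne_zero.2 dcb
  have ddc' : conj (d - p) - conj (c - p) ≠ 0 := by
    rw [← map_sub]; exact star_ne_zero.2 ddc
  have dad' : conj (a - p) - conj (d - p) ≠ 0 := by
    rw [← map_sub]; exact star_ne_zero.2 dad
  -- closed forms for the feet
  have hE : e - p = ((a - p) * conj (b - p) - conj (a - p) * (b - p)) /
      (2 * (conj (b - p) - conj (a - p))) := by rw [he]; exact perpFoot_sub p a b hab
  have hF : f - p = ((b - p) * conj (c - p) - conj (b - p) * (c - p)) /
      (2 * (conj (c - p) - conj (b - p))) := by rw [hf]; exact perpFoot_sub p b c hbc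
  have hG : g - p = ((c - p) * conj (d - p) - conj (c - p) * (d - p)) /
      (2 * (conj (d - p) - conj (c - p))) := by rw [hg]; exact perpFoot_sub p c d hcd
  have hH : h - p = ((d - p) * conj (a - p) - conj (d - p) * (a - p)) /
      (2 * (conj (a - p) - conj (d - p))) := by rw [hh]; exact perpFoot_sub p d a hda
  have hE' : conj (e - p) = (conj (a - p) * (b - p) - (a - p) * conj (b - p)) /
      (2 * ((b - p) - (a - p))) := by
    rw [hE, map_div₀]
    simp only [map_mul, map_sub, Complex.conj_conj, map_ofNat]
  have hF' : conj (f - p) = (conj (b - p) * (c - p) - (b - p) * conj (c - p)) /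
      (2 * ((c - p) - (b - p))) := by
    rw [hF, map_div₀]
    simp only [map_mul, map_sub, Complex.conj_conj, map_ofNat]
  have hG' : conj (g - p) = (conj (c - p) * (d - p) - (c - p) * conj (d - p)) /
      (2 * ((d - p) - (c - p))) := by
    rw [hG, map_div₀]
    simp only [map_mul, map_sub, Complex.conj_conj, map_ofNat]
  have hH' : conj (h - p) = (conj (d - p) * (a - p) - (d - p) * conj (a - p)) /
      (2 * ((a - p) - (d - p))) := by
    rw [hH, map_div₀]
    simp only [map_mul, map_sub, Complex.conj_conj, map_ofNat]
  -- the central identity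
  have hMne : (b - p) * (d - p) * conj ((a - p) * (c - p)) ≠ 0 := by
    refine mul_ne_zero (mul_ne_zero ?_ ?_) (star_ne_zero.2 (mul_ne_zero ?_ ?_)) <;>
      exact sub_ne_zero.2 ‹_ ≠ p›
  have hTne : (conj (f - e) * (h - e)) * conj (conj (f - g) * (h - g)) ≠ 0 := by
    refine mul_ne_zero (mul_ne_zero (star_ne_zero.2 ?_) ?_)
      (star_ne_zero.2 (mul_ne_zero (star_ne_zero.2 ?_) ?_)) <;>
      [exact sub_ne_zero.2 hef.symm; exact sub_ne_zero.2 heh.symm;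
       exact sub_ne_zero.2 hfg; exact sub_ne_zero.2 hgh.symm]
  have hid : ((conj (f - e) * (h - e)) * conj (conj (f - g) * (h - g))) *
        conj ((b - p) * (d - p) * conj ((a - p) * (c - p))) =
      conj ((conj (f - e) * (h - e)) * conj (conj (f - g) * (h - g))) *
        ((b - p) * (d - p) * conj ((a - p) * (c - p))) := by
    have hc := aux_central (a - p) (b - p) (c - p) (d - p)
      (conj (a - p)) (conj (b - p)) (conj (c - p)) (conj (d - p))
      dba dcb ddc dad dba' dcb' ddc' dad'
      (e - p) (f - p) (g - p) (h - p)
      (conj (e - p)) (conj (f - p)) (conj (g - p)) (conj (h - p))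
      hE hF hG hH hE' hF' hG' hH'
    simp only [map_mul, map_sub, Complex.conj_conj] at hc ⊢
    linear_combination hc
  have key : ((conj (f - e) * (h - e)) * conj (conj (f - g) * (h - g))).im = 0 ↔
      ((b - p) * (d - p) * conj ((a - p) * (c - p))).im = 0 := by
    constructor
    · intro ht
      have hct : conj ((conj (f - e) * (h - e)) * conj (conj (f - g) * (h - g))) =
          (conj (f - e) * (h - e)) * conj (conj (f - g) * (h - g)) :=
        Complex.conj_eq_iff_im.2 ht
      rw [hct] at hid
      exact Complex.conj_eq_iff_im.1 (mul_left_cancel₀ hTne hid)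
    · intro hm
      have hcm : conj ((b - p) * (d - p) * conj ((a - p) * (c - p))) =
          (b - p) * (d - p) * conj ((a - p) * (c - p)) :=
        Complex.conj_eq_iff_im.2 hm
      rw [hcm] at hid
      exact Complex.conj_eq_iff_im.1 (mul_right_cancel₀ hMne hid).symm
  have hSiff : ((2 : ℤ) • EuclideanGeometry.oangle f e h = (2 : ℤ) • EuclideanGeometry.oangle f g h)
      ↔ ((conj (f - e) * (h - e)) * conj (conj (f - g) * (h - g))).im = 0 := by
    rw [hoang, hoang]
    exact two_zsmul_oangle_eq_iff_im (sub_ne_zero.2 hef.symm) (sub_ne_zero.2 heh.symm)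
      (sub_ne_zero.2 hfg) (sub_ne_zero.2 hgh.symm)
  have hset : ({e, f, g, h} : Set ℂ) = {f, e, g, h} := Set.insert_comm e f {g, h}
  constructor
  · rintro (⟨o, r, hr1, hr2, hr3, hr4⟩ | hcol)
    · have hcos : EuclideanGeometry.Cospherical ({f, e, g, h} : Set ℂ) := by
        refine ⟨o, r, ?_⟩
        rintro z hz
        simp only [Set.mem_insert_iff, Set.mem_singleton_iff] at hz
        rcases hz with rfl | rfl | rfl | rfl
        · rw [Complex.dist_eq]; exact hr2
        · rw [Complex.dist_eq]; exact hr1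
        · rw [Complex.dist_eq]; exact hr3
        · rw [Complex.dist_eq]; exact hr4
      have hS := hcos.two_zsmul_oangle_eq hef heh hfg.symm hgh
      exact key.1 (hSiff.1 hS)
    · have hc1 : Collinear ℝ ({f, e, h} : Set ℂ) :=
        hcol.subset (by intro t ht; simp at ht ⊢; tauto)
      have hc2 : Collinear ℝ ({f, g, h} : Set ℂ) :=
        hcol.subset (by intro t ht; simp at ht ⊢; tauto)
      have hz1 : (2 : ℤ) • EuclideanGeometry.oangle f e h = 0 :=
        Real.Angle.two_zsmul_eq_zero_iff.2
          (EuclideanGeometry.oangle_eq_zero_or_eq_pi_iff_collinear.2 hc1)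
      have hz2 : (2 : ℤ) • EuclideanGeometry.oangle f g h = 0 :=
        Real.Angle.two_zsmul_eq_zero_iff.2
          (EuclideanGeometry.oangle_eq_zero_or_eq_pi_iff_collinear.2 hc2)
      exact key.1 (hSiff.1 (hz1.trans hz2.symm))
  · intro hR
    have hS := hSiff.2 (key.2 hR)
    rcases EuclideanGeometry.cospherical_or_collinear_of_two_zsmul_oangle_eq hS with hcos | hcol
    · obtain ⟨o, r, hr⟩ := hcos
      refine Or.inl ⟨o, r, ?_, ?_, ?_, ?_⟩ <;>
        rw [← Complex.dist_eq] <;> exact hr _ (by simp)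
    · right
      rw [hset]
      exact hcol
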